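/- Let G be a graph on n vertices with χ(G) = ⌈rn⌉, where 0 < r ≤ 1 and k = ⌊1/r⌋. Then G contains an induced subgraph H with α(H) ≤ k and |H| ≥ ((k+1)/k · r − 1/k) · n. -/

import Mathlib

open SimpleGraph

/-- The independence number of a graph: clique number of the complement. -/
noncomputable def indepNum {V : Type*} (G : SimpleGraph V) : ℕ := Gᶜ.cliqueNum

/-- The chromatic number of a graph, as a natural number. -/
noncomputable def chi {V : Type*} (G : SimpleGraph V) : ℕ := G.chromaticNumber.toNat

/-- The inverse Ramsey number ω(n,k): minimum clique number over graphs on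
`n` vertices with independence number at most `k`. -/
noncomputable def invRamsey (n k : ℕ) : ℕ :=
  sInf {w | ∃ G : SimpleGraph (Fin n), _root_.indepNum G ≤ k ∧ G.cliqueNum = w}

/-- Q(n,c): minimum clique number over graphs on `n` vertices with chromatic number `c`. -/
noncomputable def Q (n c : ℕ) : ℕ :=
  sInf {w | ∃ G : SimpleGraph (Fin n), chi G = c ∧ G.cliqueNum = w}

lemma key {V : Type*} [Fintype V] (G : SimpleGraph V) (k : ℕ) (s : Finset V) :
    ∃ u : Finset V, ∃ t : ℕ, u ⊆ s ∧ _root_.indepNum (G.induce (u : Set V)) ≤ k ∧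
      s.card = u.card + t * (k + 1) ∧ (G.induce (s : Set V)).Colorable (u.card + t) := by
  classical
  induction s using Finset.strongInductionOn with
  | _ s IH =>
  by_cases h : _root_.indepNum (G.induce (s : Set V)) ≤ k
  · refine ⟨s, 0, Finset.Subset.refl s, h, by ring, ?_⟩
    simpa using (G.induce (s : Set V)).colorable_of_fintype.mono (by simp)
  · push_neg at h
    -- there is a clique of size k+1 in the complement of the induced graph
    obtain ⟨c, hc⟩ := (G.induce (s : Set V))ᶜ.exists_isNClique_cliqueNum
    have hkc : k + 1 ≤ c.card := by rw [hc.card_eq]; exact h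
    obtain ⟨c', hc's, hc'card⟩ := Finset.exists_subset_card_eq hkc
    have hclq : (G.induce (s : Set V))ᶜ.IsNClique (k+1) c' :=
      ⟨hc.isClique.subset hc's, hc'card⟩
    set J : Finset V := c'.image Subtype.val with hJ
    have hJs : J ⊆ s := by
      intro x hx
      simp only [hJ, Finset.mem_image] at hx
      obtain ⟨y, _, rfl⟩ := hx
      exact y.2
    have hJcard : J.card = k + 1 := by
      rw [hJ, Finset.card_image_of_injective _ Subtype.val_injective, hc'card]
    have hJne : J.Nonempty := by rw [← Finset.card_pos, hJcard]; omega
    have hss : s \ J ⊂ s := Finset.sdiff_ssubset hJs hJne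
    obtain ⟨u, t, hus, hind, hcard, ⟨C⟩⟩ := IH (s \ J) hss
    refine ⟨u, t + 1, hus.trans (Finset.sdiff_subset), hind, ?_, ?_⟩
    · have h1 : (s \ J).card = s.card - J.card := Finset.card_sdiff_of_subset hJs
      have hle : J.card ≤ s.card := Finset.card_le_card hJs
      have hmul : (t + 1) * (k + 1) = t * (k + 1) + (k + 1) := by ring
      omega
    · -- build a coloring of induce s with (u.card + t) + 1 colors
      have hadjJ : ∀ a b : ↥(s : Set V), (a : V) ∈ J → (b : V) ∈ J →
          ¬ (G.induce (s : Set V)).Adj a b := by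
        intro a b ha hb hab
        simp only [hJ, Finset.mem_image] at ha hb
        obtain ⟨a', ha', haa⟩ := ha
        obtain ⟨b', hb', hbb⟩ := hb
        have haa' : a' = a := Subtype.ext haa
        have hbb' : b' = b := Subtype.ext hbb
        subst haa' hbb'
        have hne : a' ≠ b' := fun e => (G.induce (s : Set V)).ne_of_adj hab (by rw [e])
        have := hclq.isClique ha' hb' (by simpa using hne)
        rw [compl_adj] at this
        exact this.2 hab
      refine ⟨Coloring.mk (fun v => if hv : (v : V) ∈ J then Fin.last (u.card + t)
        else (C ⟨v, by
          have hvs : (v : V) ∈ s := v.2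
          simp only [Finset.coe_sdiff, Set.mem_diff, Finset.mem_coe]
          exact ⟨hvs, hv⟩⟩).castSucc) ?_⟩
      intro a b hab
      by_cases ha : (a : V) ∈ J <;> by_cases hb : (b : V) ∈ J
      · exact absurd hab (hadjJ a b ha hb)
      · simp only [dif_pos ha, dif_neg hb]
        exact fun e => absurd e.symm (Fin.castSucc_lt_last _).ne
      · simp only [dif_neg ha, dif_pos hb]
        exact fun e => absurd e (Fin.castSucc_lt_last _).ne
      · simp only [dif_neg ha, dif_neg hb]
        intro e
        have e' := Fin.castSucc_injective _ e
        have hadj' : (G.induce ((s \ J : Finset V) : Set V)).Adj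
            ⟨a, by simp only [Finset.coe_sdiff, Set.mem_diff, Finset.mem_coe]; exact ⟨a.2, ha⟩⟩
            ⟨b, by simp only [Finset.coe_sdiff, Set.mem_diff, Finset.mem_coe]; exact ⟨b.2, hb⟩⟩ := by
          simpa using hab
        exact C.valid hadj' e'

theorem stmt_10 {V : Type*} [Fintype V] (G : SimpleGraph V) (r : ℝ) (hr0 : 0 < r) (hr1 : r ≤ 1)
    (n : ℕ) (hcard : Fintype.card V = n) (k : ℕ) (hk : k = ⌊1 / r⌋₊)
    (hchi : chi G = ⌈r * n⌉₊) :
    ∃ s : Finset V, _root_.indepNum (G.induce (s : Set V)) ≤ k ∧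
      ((k + 1 : ℝ) / k * r - 1 / k) * n ≤ (s.card : ℝ) := by
  classical
  obtain ⟨u, t, -, hind, hcardeq, hcol⟩ := key G k (Finset.univ : Finset V)
  have hk1 : 1 ≤ k := by
    rw [hk]
    apply Nat.le_floor
    rw [Nat.cast_one, le_div_iff₀ hr0, one_mul]
    exact hr1
  have hcol' : G.Colorable (u.card + t) := by
    have huniv : ((Finset.univ : Finset V) : Set V) = Set.univ := by simp
    rw [huniv] at hcol
    exact hcol.of_hom G.induceUnivIso.symm.toEmbedding.toHom
  have hchile : chi G ≤ u.card + t := by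
    have h2 : G.chromaticNumber ≤ ((u.card + t : ℕ) : ℕ∞) := hcol'.chromaticNumber_le
    exact ENat.toNat_le_of_le_coe h2
  have hn : n = u.card + t * (k + 1) := by
    rw [← hcard, ← Finset.card_univ]; exact hcardeq
  refine ⟨u, hind, ?_⟩
  have hceil : (⌈r * n⌉₊ : ℝ) ≤ (u.card : ℝ) + t := by
    rw [← hchi]; exact_mod_cast hchile
  have hrn : r * n ≤ (⌈r * n⌉₊ : ℝ) := Nat.le_ceil _
  have hk0 : (0 : ℝ) < k := by exact_mod_cast hk1
  have hnr : (n : ℝ) = (u.card : ℝ) + t * (k + 1) := by exact_mod_cast hn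
  rw [show ((k + 1 : ℝ) / k * r - 1 / k) * n = ((k + 1) * (r * n) - n) / k by field_simp,
    div_le_iff₀ hk0]
  nlinarith [mul_le_mul_of_nonneg_left (hrn.trans hceil) (by positivity : (0:ℝ) ≤ (k:ℝ) + 1)]
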